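/- Let θ > 0 and let V : ℕ×V₂ → ℝ satisfy sup over x₁ ≥ 1 and x₂ ∈ V₂ of ⟨x₁⟩^{1+θ}·|V(x₁−1, x₂) − V(x₁, x₂)| < ∞, where ⟨t⟩ := √(1+t²). Then there exists C > 0 such that for every finitely supported f : ℕ×V₂ → ℂ: ‖⟨Λ^f⟩^{θ}·( V·(i A_{G^f} f) − i A_{G^f}(V·f) )‖_{ℓ²(ℕ×V₂, m^f)} ≤ C·‖f‖_{ℓ²(ℕ×V₂, m^f)}, where V· denotes multiplication by V and ⟨Λ^f⟩^{θ} denotes multiplication by (1 + (x₁ + 1/2)²)^{θ/2} in the first variable. -/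

import Mathlib

noncomputable section

open Complex

/-- `(A_ℕ f)(n) = (i/2)·((n − 1/2)·f(n−1) − (n + 1/2)·f(n+1))`, with `f(−1) = 0`. -/
def aN (f : ℕ → ℂ) : ℕ → ℂ := fun n =>
  (I / 2) * (((n : ℂ) - 1 / 2) * (if n = 0 then 0 else f (n - 1))
    - ((n : ℂ) + 1 / 2) * f (n + 1))

/-- The gauge transform `T_{m→m'} f = (x ↦ √(m(x)/m'(x))·f(x))`. -/
def Tw {V : Type*} (m m' : V → ℝ) (f : V → ℂ) : V → ℂ :=
  fun x => (Real.sqrt (m x / m' x) : ℂ) * f x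

/-- Weight of the funnel half-line: `m₁^f(n) = eⁿ`. -/
def m1F : ℕ → ℝ := fun n => Real.exp n

/-- `A_{m₁^f} := T_{1→m₁^f} ∘ A_ℕ ∘ T_{1→m₁^f}⁻¹`. -/
def aM1F (f : ℕ → ℂ) : ℕ → ℂ :=
  Tw (fun _ => 1) m1F (aN (Tw m1F (fun _ => 1) f))

/-- `A_{G^f} := A_{m₁^f} ⊗ 1`. -/
def aGF {V₂ : Type*} (f : ℕ × V₂ → ℂ) : ℕ × V₂ → ℂ := fun v =>
  aM1F (fun n => f (n, v.2)) v.1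

/-- Weight of the funnel: `m^f(x,y) = eˣ·m₂`. -/
def mF (V₂ : Type*) (m₂ : ℝ) : ℕ × V₂ → ℝ := fun v => Real.exp v.1 * m₂

/-- The ℓ²-norm with weight `m`. -/
def nrm {V : Type*} (m : V → ℝ) (f : V → ℂ) : ℝ :=
  Real.sqrt (∑' x : V, m x * ‖f x‖ ^ 2)

/-- `⟨Λ^f⟩^θ`: multiplication by `(1 + (x₁ + 1/2)²)^{θ/2}` in the first variable. -/
def wLam {V₂ : Type*} (θ : ℝ) (f : ℕ × V₂ → ℂ) : ℕ × V₂ → ℂ := fun v =>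
  (((1 + ((v.1 : ℝ) + 1 / 2) ^ 2) ^ (θ / 2) : ℝ) : ℂ) * f v

/-- Numerical coefficient bound. -/
lemma coeffB (θ : ℝ) (hθ : 0 < θ) (n : ℕ) :
    (1 + ((n:ℝ) + 1/2)^2)^(θ/2) * ((n:ℝ) + 1/2)
      ≤ Real.sqrt 2 * 3^(θ/2) * Real.sqrt (1 + (n:ℝ)^2) ^ (1+θ) := by
  set t := Real.sqrt (1 + (n:ℝ)^2) with ht
  have ht1 : 1 ≤ t := Real.one_le_sqrt.mpr (by nlinarith [sq_nonneg ((n:ℝ))])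
  have ht0 : (0:ℝ) < t := lt_of_lt_of_le one_pos ht1
  have hsq : t^2 = 1 + (n:ℝ)^2 := Real.sq_sqrt (by positivity)
  have h1 : (n:ℝ) + 1/2 ≤ Real.sqrt 2 * t := by
    rw [← Real.sqrt_mul (by norm_num) _]
    rw [Real.le_sqrt (by positivity) (by positivity)]
    nlinarith [sq_nonneg ((n:ℝ) - 1)]
  have h2 : (1 + ((n:ℝ) + 1/2)^2)^(θ/2) ≤ (3:ℝ)^(θ/2) * t^θ := by
    have hle : 1 + ((n:ℝ) + 1/2)^2 ≤ 3 * (1 + (n:ℝ)^2) := by nlinarith [sq_nonneg ((n:ℝ)-1)]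
    calc (1 + ((n:ℝ) + 1/2)^2)^(θ/2) ≤ (3 * (1 + (n:ℝ)^2))^(θ/2) :=
          Real.rpow_le_rpow (by positivity) hle (by positivity)
      _ = 3^(θ/2) * (1 + (n:ℝ)^2)^(θ/2) := Real.mul_rpow (by norm_num) (by positivity)
      _ = 3^(θ/2) * t^θ := by
          rw [← hsq, ← Real.rpow_natCast t 2, ← Real.rpow_mul ht0.le]
          congr 1
          push_cast
          ring
  have ht1θ : t ^ (1+θ) = t * t^θ := by
    rw [Real.rpow_add ht0, Real.rpow_one]
  calc (1 + ((n:ℝ) + 1/2)^2)^(θ/2) * ((n:ℝ) + 1/2)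
      ≤ (3^(θ/2) * t^θ) * (Real.sqrt 2 * t) := by
        apply mul_le_mul h2 h1 (by positivity) (by positivity)
    _ = Real.sqrt 2 * 3^(θ/2) * t^(1+θ) := by rw [ht1θ]; ring

/-- Explicit commutator formula. -/
lemma keyB {V₂ : Type*} (W : ℕ × V₂ → ℝ) (f : ℕ × V₂ → ℂ) (n : ℕ) (y : V₂) :
    (W (n,y) : ℂ) * (I * aGF f (n,y)) - I * aGF (fun w => (W w : ℂ) * f w) (n,y)
    = (Real.sqrt (1 / Real.exp n) : ℂ) * (I * (I/2)) *
      (((n:ℂ) - 1/2) * (if n = 0 then 0 else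
          (Real.sqrt (Real.exp (n-1:ℕ)) : ℂ) * ((W (n,y) : ℂ) - (W (n-1,y) : ℂ)) * f (n-1,y))
       - ((n:ℂ) + 1/2) *
          ((Real.sqrt (Real.exp (n+1:ℕ)) : ℂ) * ((W (n,y) : ℂ) - (W (n+1,y) : ℂ)) * f (n+1,y))) := by
  simp only [aGF, aM1F, aN, Tw, m1F, div_one]
  rcases eq_or_ne n 0 with h | h <;> simp only [h, if_true, if_false, ite_true, ite_false,
    reduceIte] <;> push_cast <;> ring

set_option maxHeartbeats 1000000 in
/-- Pointwise bound. -/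
lemma pointwiseB {V₂ : Type*} (θ : ℝ) (hθ : 0 < θ) (W : ℕ × V₂ → ℝ) (C₁ : ℝ) (hC₁ : 0 ≤ C₁)
    (hW : ∀ x₁ : ℕ, 1 ≤ x₁ → ∀ x₂ : V₂,
      Real.sqrt (1 + (x₁ : ℝ) ^ 2) ^ (1 + θ) * |W (x₁ - 1, x₂) - W (x₁, x₂)| ≤ C₁)
    (f : ℕ × V₂ → ℂ) (n : ℕ) (y : V₂) :
    ‖wLam θ (fun v => (W v : ℂ) * (I * aGF f v) - I * aGF (fun w => (W w : ℂ) * f w) v) (n,y)‖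
      ≤ (Real.sqrt 2 * 3^(θ/2) * Real.exp 1 * C₁) *
        ((if n = 0 then 0 else ‖f (n-1,y)‖) + ‖f (n+1,y)‖) := by
  have he1 : (1:ℝ) ≤ Real.exp 1 := by
    have := Real.add_one_le_exp (1:ℝ); linarith
  set K := Real.sqrt 2 * 3^(θ/2) * Real.exp 1 * C₁ with hK
  set B₀ := Real.sqrt 2 * 3^(θ/2) * C₁ with hB₀
  have hB₀0 : 0 ≤ B₀ := by rw [hB₀]; positivity
  set w : ℝ := (1 + ((n:ℝ) + 1/2)^2)^(θ/2) with hwdef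
  set c : ℝ := Real.sqrt (1 / Real.exp n) with hcdef
  have hw0 : (0:ℝ) ≤ w := by rw [hwdef]; positivity
  have hc0 : (0:ℝ) ≤ c := Real.sqrt_nonneg _
  set A : ℂ := ((n:ℂ) - 1/2) * (if n = 0 then 0 else
      (Real.sqrt (Real.exp (n-1:ℕ)) : ℂ) * ((W (n,y) : ℂ) - (W (n-1,y) : ℂ)) * f (n-1,y)) with hA
  set Bt : ℂ := ((n:ℂ) + 1/2) *
      ((Real.sqrt (Real.exp (n+1:ℕ)) : ℂ) * ((W (n,y) : ℂ) - (W (n+1,y) : ℂ)) * f (n+1,y)) with hBt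
  have hnorm : ‖wLam θ (fun v => (W v : ℂ) * (I * aGF f v)
      - I * aGF (fun w => (W w : ℂ) * f w) v) (n,y)‖ = w * (c * ((1/2) * ‖A - Bt‖)) := by
    simp only [wLam]
    rw [keyB W f n y, ← hA, ← hBt, ← hcdef]
    show ‖((w:ℝ):ℂ) * _‖ = _
    simp only [norm_mul, Complex.norm_real, Complex.norm_I, norm_div, Real.norm_eq_abs,
      Complex.norm_ofNat, _root_.abs_of_nonneg hw0, _root_.abs_of_nonneg hc0]
    ring
  rw [hnorm]
  have htri : w * (c * ((1/2) * ‖A - Bt‖))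
      ≤ (1/2) * (w * (c * ‖A‖)) + (1/2) * (w * (c * ‖Bt‖)) := by
    have := norm_sub_le A Bt
    nlinarith [norm_nonneg A, norm_nonneg Bt, mul_nonneg hw0 hc0]
  have hterm₁ : (1/2) * (w * (c * ‖A‖)) ≤ K * (if n = 0 then 0 else ‖f (n-1,y)‖) := by
    rcases eq_or_ne n 0 with h | h
    · simp [hA, h]
    · rw [if_neg h]
      have hn1 : 1 ≤ n := Nat.one_le_iff_ne_zero.mpr h
      have hWn := hW n hn1 y
      rw [abs_sub_comm] at hWn
      set d : ℝ := |W (n,y) - W (n-1,y)| with hd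
      have hd0 : 0 ≤ d := abs_nonneg _
      have hcast : ((W (n,y):ℂ) - (W (n-1,y):ℂ)) = (((W (n,y) - W (n-1,y)) : ℝ) : ℂ) := by
        push_cast; ring
      have hnormA : ‖A‖ = ‖(n:ℂ) - 1/2‖ * (Real.sqrt (Real.exp (n-1:ℕ)) * (d * ‖f (n-1,y)‖)) := by
        rw [hA, if_neg h, hcast]
        simp only [norm_mul, Complex.norm_real, Real.norm_eq_abs,
          _root_.abs_of_nonneg (Real.sqrt_nonneg _), ← hd]
        ring
      have hP : ‖(n:ℂ) - 1/2‖ ≤ (n:ℝ) + 1/2 := by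
        have : ((n:ℂ) - 1/2) = (((n:ℝ) - 1/2 : ℝ) : ℂ) := by push_cast; ring
        rw [this, Complex.norm_real]
        rw [Real.norm_eq_abs, abs_le]
        constructor <;> [linarith [Nat.cast_nonneg (α := ℝ) n]; linarith]
      have hcs : c * Real.sqrt (Real.exp (n-1:ℕ)) ≤ 1 := by
        rw [hcdef, ← Real.sqrt_mul (by positivity)]
        have harg : (1 / Real.exp (n:ℝ)) * Real.exp ((n-1:ℕ):ℝ) = Real.exp (((n-1:ℕ):ℝ) - n) := by
          rw [one_div, ← Real.exp_neg, ← Real.exp_add]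
          congr 1
          ring
        rw [harg, Real.sqrt_le_one, Real.exp_le_one_iff]
        have : ((n-1:ℕ):ℝ) ≤ (n:ℝ) := by exact_mod_cast Nat.sub_le n 1
        linarith
      have hwd : w * (((n:ℝ) + 1/2) * d) ≤ B₀ := by
        calc w * (((n:ℝ) + 1/2) * d) = (w * ((n:ℝ) + 1/2)) * d := by ring
          _ ≤ (Real.sqrt 2 * 3^(θ/2) * Real.sqrt (1 + (n:ℝ)^2) ^ (1+θ)) * d :=
              mul_le_mul_of_nonneg_right (coeffB θ hθ n) hd0
          _ = (Real.sqrt 2 * 3^(θ/2)) * (Real.sqrt (1 + (n:ℝ)^2) ^ (1+θ) * d) := by ring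
          _ ≤ B₀ := by
              rw [hB₀]
              exact mul_le_mul_of_nonneg_left hWn (by positivity)
      calc (1/2) * (w * (c * ‖A‖))
          = (1/2) * ((c * Real.sqrt (Real.exp (n-1:ℕ))) * ((w * (‖(n:ℂ) - 1/2‖ * d))
              * ‖f (n-1,y)‖)) := by rw [hnormA]; ring
        _ ≤ (1/2) * (1 * (B₀ * ‖f (n-1,y)‖)) := by
            have hYd : w * (‖(n:ℂ) - 1/2‖ * d) ≤ B₀ := by
              calc w * (‖(n:ℂ) - 1/2‖ * d) ≤ w * (((n:ℝ) + 1/2) * d) := by gcongr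
                _ ≤ B₀ := hwd
            have h2 := mul_le_mul_of_nonneg_right hYd (norm_nonneg (f (n-1,y)))
            have hc' : 0 ≤ (w * (‖(n:ℂ) - 1/2‖ * d)) * ‖f (n-1,y)‖ :=
              mul_nonneg (mul_nonneg hw0 (mul_nonneg (norm_nonneg _) hd0)) (norm_nonneg _)
            have h3 := mul_le_mul hcs h2 hc' (by norm_num : (0:ℝ) ≤ 1)
            linarith
        _ ≤ K * ‖f (n-1,y)‖ := by
            have hKB : K = Real.exp 1 * B₀ := by rw [hK, hB₀]; ring
            rw [hKB]
            have h1 : (1/2) * (1 * (B₀ * ‖f (n-1,y)‖)) = ((1/2) * B₀) * ‖f (n-1,y)‖ := by ring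
            rw [h1]
            apply mul_le_mul_of_nonneg_right _ (norm_nonneg _)
            nlinarith [hB₀0, he1]
  have hterm₂ : (1/2) * (w * (c * ‖Bt‖)) ≤ K * ‖f (n+1,y)‖ := by
    have hWn := hW (n+1) (by omega) y
    simp only [Nat.add_sub_cancel] at hWn
    push_cast at hWn
    set d : ℝ := |W (n,y) - W (n+1,y)| with hd
    have hd0 : 0 ≤ d := abs_nonneg _
    have hcast : ((W (n,y):ℂ) - (W (n+1,y):ℂ)) = (((W (n,y) - W (n+1,y)) : ℝ) : ℂ) := by
      push_cast; ring
    have hnormB : ‖Bt‖ = ((n:ℝ) + 1/2) * (Real.sqrt (Real.exp (n+1:ℕ)) * (d * ‖f (n+1,y)‖)) := by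
      rw [hBt, hcast]
      have hcast2 : ((n:ℂ) + 1/2) = (((n:ℝ) + 1/2 : ℝ) : ℂ) := by push_cast; ring
      rw [hcast2]
      simp only [norm_mul, Complex.norm_real, Real.norm_eq_abs,
        _root_.abs_of_nonneg (Real.sqrt_nonneg _),
        _root_.abs_of_nonneg (by positivity : (0:ℝ) ≤ (n:ℝ) + 1/2), ← hd]
      ring
    have hcs : c * Real.sqrt (Real.exp (n+1:ℕ)) ≤ Real.exp 1 := by
      rw [hcdef, ← Real.sqrt_mul (by positivity)]
      have harg : (1 / Real.exp (n:ℝ)) * Real.exp ((n+1:ℕ):ℝ) = Real.exp 1 := by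
        rw [one_div, ← Real.exp_neg, ← Real.exp_add]
        congr 1
        push_cast
        ring
      rw [harg]
      calc Real.sqrt (Real.exp 1) ≤ Real.sqrt ((Real.exp 1)^2) := by
            apply Real.sqrt_le_sqrt; nlinarith
        _ = Real.exp 1 := Real.sqrt_sq (Real.exp_pos 1).le
    have hwd : w * (((n:ℝ) + 1/2) * d) ≤ B₀ := by
      have hmono : Real.sqrt (1 + (n:ℝ)^2) ^ (1+θ) ≤ Real.sqrt (1 + ((n:ℝ)+1)^2) ^ (1+θ) := by
        apply Real.rpow_le_rpow (Real.sqrt_nonneg _) _ (by positivity)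
        apply Real.sqrt_le_sqrt
        have hn0 : (0:ℝ) ≤ (n:ℝ) := Nat.cast_nonneg n
        nlinarith
      calc w * (((n:ℝ) + 1/2) * d) = (w * ((n:ℝ) + 1/2)) * d := by ring
        _ ≤ (Real.sqrt 2 * 3^(θ/2) * Real.sqrt (1 + (n:ℝ)^2) ^ (1+θ)) * d :=
            mul_le_mul_of_nonneg_right (coeffB θ hθ n) hd0
        _ ≤ (Real.sqrt 2 * 3^(θ/2) * Real.sqrt (1 + ((n:ℝ)+1)^2) ^ (1+θ)) * d := by
            apply mul_le_mul_of_nonneg_right _ hd0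
            apply mul_le_mul_of_nonneg_left hmono (by positivity)
        _ = (Real.sqrt 2 * 3^(θ/2)) * (Real.sqrt (1 + ((n:ℝ)+1)^2) ^ (1+θ) * d) := by ring
        _ ≤ B₀ := by
            rw [hB₀]
            exact mul_le_mul_of_nonneg_left hWn (by positivity)
    calc (1/2) * (w * (c * ‖Bt‖))
        = (1/2) * ((c * Real.sqrt (Real.exp (n+1:ℕ))) * ((w * (((n:ℝ) + 1/2) * d))
            * ‖f (n+1,y)‖)) := by rw [hnormB]; ring
      _ ≤ (1/2) * (Real.exp 1 * (B₀ * ‖f (n+1,y)‖)) := by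
          have h2 := mul_le_mul_of_nonneg_right hwd (norm_nonneg (f (n+1,y)))
          have hc' : 0 ≤ (w * (((n:ℝ) + 1/2) * d)) * ‖f (n+1,y)‖ :=
            mul_nonneg (mul_nonneg hw0 (mul_nonneg (by positivity) hd0)) (norm_nonneg _)
          have h3 := mul_le_mul hcs h2 hc' (Real.exp_pos 1).le
          linarith
      _ ≤ K * ‖f (n+1,y)‖ := by
          have hKB : K = Real.exp 1 * B₀ := by rw [hK, hB₀]; ring
          rw [hKB]
          have h1 : (1/2) * (Real.exp 1 * (B₀ * ‖f (n+1,y)‖))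
              = ((1/2) * (Real.exp 1 * B₀)) * ‖f (n+1,y)‖ := by ring
          rw [h1]
          apply mul_le_mul_of_nonneg_right _ (norm_nonneg _)
          nlinarith [mul_nonneg (Real.exp_pos 1).le hB₀0]
  calc w * (c * ((1/2) * ‖A - Bt‖)) ≤ (1/2) * (w * (c * ‖A‖)) + (1/2) * (w * (c * ‖Bt‖)) := htri
    _ ≤ K * (if n = 0 then 0 else ‖f (n-1,y)‖) + K * ‖f (n+1,y)‖ := add_le_add hterm₁ hterm₂
    _ = K * ((if n = 0 then 0 else ‖f (n-1,y)‖) + ‖f (n+1,y)‖) := by ring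

/-- **Weighted bound for the commutator `[V(·), iA_{G^f}]`:** if the potential `V`
has long-range decay `⟨x₁⟩^{1+θ}·|V(x₁−1,x₂) − V(x₁,x₂)|` bounded, then
`⟨Λ^f⟩^θ [V, iA_{G^f}]` is bounded on `ℓ²(ℕ×V₂, m^f)`. -/
theorem stmt18 {V₂ : Type*} [Fintype V₂] (m₂ : ℝ) (hm₂ : 0 < m₂)
    (θ : ℝ) (hθ : 0 < θ) (W : ℕ × V₂ → ℝ)
    (hW : ∃ C₀ : ℝ, ∀ x₁ : ℕ, 1 ≤ x₁ → ∀ x₂ : V₂,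
      Real.sqrt (1 + (x₁ : ℝ) ^ 2) ^ (1 + θ) * |W (x₁ - 1, x₂) - W (x₁, x₂)| ≤ C₀) :
    ∃ C > 0, ∀ f : ℕ × V₂ → ℂ, (Function.support f).Finite →
      nrm (mF V₂ m₂) (wLam θ (fun v =>
          (W v : ℂ) * (I * aGF f v) - I * aGF (fun w => (W w : ℂ) * f w) v))
        ≤ C * nrm (mF V₂ m₂) f := by
  classical
  obtain ⟨C₀, hC₀⟩ := hW
  set C₁ : ℝ := max C₀ 1 with hC₁def
  have hC₁1 : (1:ℝ) ≤ C₁ := le_max_right _ _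
  have hC₁0 : (0:ℝ) ≤ C₁ := by linarith
  have hWC₁ : ∀ x₁ : ℕ, 1 ≤ x₁ → ∀ x₂ : V₂,
      Real.sqrt (1 + (x₁ : ℝ) ^ 2) ^ (1 + θ) * |W (x₁ - 1, x₂) - W (x₁, x₂)| ≤ C₁ :=
    fun x₁ h x₂ => le_trans (hC₀ x₁ h x₂) (le_max_left _ _)
  set K : ℝ := Real.sqrt 2 * 3^(θ/2) * Real.exp 1 * C₁ with hKdef
  have hK0 : 0 < K := by
    rw [hKdef]
    have h3 : (0:ℝ) < 3^(θ/2) := Real.rpow_pos_of_pos (by norm_num) _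
    have h2 : (0:ℝ) < Real.sqrt 2 := Real.sqrt_pos.mpr (by norm_num)
    exact mul_pos (mul_pos (mul_pos h2 h3) (Real.exp_pos 1)) (lt_of_lt_of_le one_pos hC₁1)
  refine ⟨K * Real.sqrt (2 * (Real.exp 1 + 1)), by positivity, ?_⟩
  intro f hf
  set g : ℕ × V₂ → ℂ := wLam θ (fun v =>
      (W v : ℂ) * (I * aGF f v) - I * aGF (fun w => (W w : ℂ) * f w) v) with hgdef
  have hpt : ∀ v : ℕ × V₂, ‖g v‖ ≤
      K * ((if v.1 = 0 then 0 else ‖f (v.1 - 1, v.2)‖) + ‖f (v.1 + 1, v.2)‖) := by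
    rintro ⟨n, y⟩
    exact pointwiseB θ hθ W C₁ hC₁0 hWC₁ f n y
  -- auxiliary real functions
  set G : ℕ × V₂ → ℝ := fun v => mF V₂ m₂ v * ‖f v‖ ^ 2 with hGdef
  set Fm : ℕ × V₂ → ℝ := fun v =>
      mF V₂ m₂ v * (if v.1 = 0 then 0 else ‖f (v.1 - 1, v.2)‖) ^ 2 with hFmdef
  set Fp : ℕ × V₂ → ℝ := fun v => mF V₂ m₂ v * ‖f (v.1 + 1, v.2)‖ ^ 2 with hFpdef
  have hmF0 : ∀ v : ℕ × V₂, 0 ≤ mF V₂ m₂ v := fun v =>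
    mul_nonneg (Real.exp_pos _).le hm₂.le
  -- injection
  set Φ : ℕ × V₂ → ℕ × V₂ := fun v => (v.1 + 1, v.2) with hΦdef
  have hΦinj : Function.Injective Φ := by
    rintro ⟨a, b⟩ ⟨a', b'⟩ h
    simp only [hΦdef, Prod.mk.injEq] at h
    exact Prod.ext (by omega) h.2
  -- summability
  have hG : Summable G := by
    apply summable_of_finite_support
    apply Set.Finite.subset hf
    intro v hv
    simp only [hGdef, Function.mem_support] at hv
    simp only [Function.mem_support]
    intro h0
    apply hv
    rw [h0]
    simp
  have hFm : Summable Fm := by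
    apply summable_of_finite_support
    apply Set.Finite.subset (hf.image Φ)
    intro v hv
    simp only [hFmdef, Function.mem_support] at hv
    rcases eq_or_ne v.1 0 with h0 | h0
    · exfalso; apply hv; simp [h0]
    · have hfne : f (v.1 - 1, v.2) ≠ 0 := by
        intro h; apply hv; simp [h0, h]
      refine ⟨(v.1 - 1, v.2), hfne, ?_⟩
      simp only [hΦdef]
      have : v.1 - 1 + 1 = v.1 := by omega
      rw [this]
  have hFp : Summable Fp := by
    apply summable_of_finite_support
    apply Set.Finite.subset (hf.image (fun v => (v.1 - 1, v.2)))
    intro v hv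
    simp only [hFpdef, Function.mem_support] at hv
    have hfne : f (v.1 + 1, v.2) ≠ 0 := by
      intro h; apply hv; simp [h]
    exact ⟨(v.1 + 1, v.2), hfne, by simp⟩
  -- sum bounds
  have hFmS : ∑' v, Fm v = Real.exp 1 * ∑' v, G v := by
    have hrange : Function.support Fm ⊆ Set.range Φ := by
      intro v hv
      rw [Function.mem_support] at hv
      rcases eq_or_ne v.1 0 with h0 | h0
      · exfalso; apply hv; simp [hFmdef, h0]
      · exact ⟨(v.1 - 1, v.2), by simp only [hΦdef]; exact Prod.ext (by omega) rfl⟩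
    rw [← hΦinj.tsum_eq hrange]
    rw [← tsum_mul_left]
    apply tsum_congr
    rintro ⟨n, y⟩
    simp only [hFmdef, hΦdef, hGdef, mF, Nat.add_sub_cancel]
    rcases eq_or_ne (n+1) 0 with h | h
    · omega
    · rw [if_neg h]
      push_cast
      rw [Real.exp_add]
      ring
  have hFpS : ∑' v, Fp v ≤ ∑' v, G v := by
    apply hFp.tsum_le_tsum_of_inj Φ hΦinj
    · intro c _; exact mul_nonneg (hmF0 c) (sq_nonneg _)
    · rintro ⟨n, y⟩
      simp only [hFpdef, hΦdef, hGdef, mF]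
      apply mul_le_mul_of_nonneg_right _ (sq_nonneg _)
      apply mul_le_mul_of_nonneg_right _ hm₂.le
      apply Real.exp_le_exp.mpr
      push_cast
      linarith
    · exact hG
  -- main pointwise square bound
  have hptsq : ∀ v : ℕ × V₂, mF V₂ m₂ v * ‖g v‖ ^ 2
      ≤ 2 * K^2 * Fm v + 2 * K^2 * Fp v := by
    intro v
    set a : ℝ := if v.1 = 0 then 0 else ‖f (v.1 - 1, v.2)‖ with hadef
    have ha0 : 0 ≤ a := by rw [hadef]; split <;> [norm_num; exact norm_nonneg _]
    have hb0 : 0 ≤ ‖f (v.1 + 1, v.2)‖ := norm_nonneg _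
    have h1 : ‖g v‖ ^ 2 ≤ 2 * K^2 * (a^2 + ‖f (v.1 + 1, v.2)‖^2) := by
      have h2 := hpt v
      rw [← hadef] at h2
      nlinarith [norm_nonneg (g v), sq_nonneg (a - ‖f (v.1 + 1, v.2)‖), hK0.le,
        mul_self_le_mul_self (norm_nonneg (g v)) h2]
    calc mF V₂ m₂ v * ‖g v‖ ^ 2 ≤ mF V₂ m₂ v * (2 * K^2 * (a^2 + ‖f (v.1 + 1, v.2)‖^2)) :=
          mul_le_mul_of_nonneg_left h1 (hmF0 v)
      _ = 2 * K^2 * (mF V₂ m₂ v * a^2) + 2 * K^2 * (mF V₂ m₂ v * ‖f (v.1 + 1, v.2)‖^2) := by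
          ring
      _ = 2 * K^2 * Fm v + 2 * K^2 * Fp v := by rw [hFmdef, hFpdef]
  have hGsum : Summable (fun v => mF V₂ m₂ v * ‖g v‖ ^ 2) := by
    apply summable_of_finite_support
    apply Set.Finite.subset ((hf.image Φ).union (hf.image (fun v => (v.1 - 1, v.2))))
    intro v hv
    rw [Function.mem_support] at hv
    by_contra hvnot
    simp only [Set.mem_union] at hvnot
    push_neg at hvnot
    apply hv
    have hgz : g v = 0 := by
      have h2 := hpt v
      have ha : (if v.1 = 0 then (0:ℝ) else ‖f (v.1 - 1, v.2)‖) = 0 := by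
        rcases eq_or_ne v.1 0 with h0 | h0
        · simp [h0]
        · rw [if_neg h0]
          by_contra hne
          apply hvnot.1
          refine ⟨(v.1 - 1, v.2), by simpa using hne, ?_⟩
          simp only [hΦdef]
          exact Prod.ext (by omega) rfl
      have hb : ‖f (v.1 + 1, v.2)‖ = 0 := by
        by_contra hne
        apply hvnot.2
        exact ⟨(v.1 + 1, v.2), by simpa using hne, by simp⟩
      rw [ha, hb] at h2
      simp only [add_zero, mul_zero] at h2
      exact norm_le_zero_iff.mp h2
    rw [hgz]
    simp
  -- total bound
  have htot : ∑' v, mF V₂ m₂ v * ‖g v‖ ^ 2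
      ≤ 2 * K^2 * (Real.exp 1 + 1) * ∑' v, G v := by
    calc ∑' v, mF V₂ m₂ v * ‖g v‖ ^ 2
        ≤ ∑' v, (2 * K^2 * Fm v + 2 * K^2 * Fp v) := by
          apply hGsum.tsum_le_tsum hptsq
          exact Summable.add (hFm.mul_left _) (hFp.mul_left _)
      _ = 2 * K^2 * ∑' v, Fm v + 2 * K^2 * ∑' v, Fp v := by
          rw [Summable.tsum_add (hFm.mul_left _) (hFp.mul_left _), tsum_mul_left, tsum_mul_left]
      _ ≤ 2 * K^2 * (Real.exp 1 * ∑' v, G v) + 2 * K^2 * ∑' v, G v := by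
          apply add_le_add
          · rw [hFmS]
          · apply mul_le_mul_of_nonneg_left hFpS (by positivity)
      _ = 2 * K^2 * (Real.exp 1 + 1) * ∑' v, G v := by ring
  -- conclude
  have hGnn : 0 ≤ ∑' v, G v := tsum_nonneg (fun v => mul_nonneg (hmF0 v) (sq_nonneg _))
  rw [nrm, nrm]
  calc Real.sqrt (∑' v, mF V₂ m₂ v * ‖g v‖ ^ 2)
      ≤ Real.sqrt (2 * K^2 * (Real.exp 1 + 1) * ∑' v, G v) := Real.sqrt_le_sqrt htot
    _ = (K * Real.sqrt (2 * (Real.exp 1 + 1))) * Real.sqrt (∑' v, G v) := by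
        rw [show 2 * K^2 * (Real.exp 1 + 1) * ∑' v, G v
            = (K * Real.sqrt (2 * (Real.exp 1 + 1)))^2 * ∑' v, G v by
          rw [mul_pow K (Real.sqrt (2 * (Real.exp 1 + 1))) 2,
            Real.sq_sqrt (by positivity : (0:ℝ) ≤ 2 * (Real.exp 1 + 1))]
          ring]
        rw [Real.sqrt_mul (sq_nonneg _), Real.sqrt_sq (by positivity)]
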